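/- Let g : ℝ → ℝ be a continuous function and let n ≥ 1 be an integer. If for all r, s ∈ ℝ one has ∑_{k=0}^{n} C(n, k) (−1)^{n−k} g(r + k·s) = 0, then g is (given by) a real polynomial of degree less than n. -/

import Mathlib

open Finset Polynomial fwdDiff


lemma aux_fwd (n : ℕ) : ∀ (P : Polynomial ℝ), P.degree < n → ∀ s : ℝ,
    (fwdDiff s)^[n] (fun t => P.eval t) = 0 := by
  induction n with
  | zero =>
    intro P hP s
    have : P = 0 := by
      by_contra h0
      exact absurd hP (not_lt.2 (by simpa using Polynomial.zero_le_degree_iff.2 h0))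
    subst this
    funext t; simp
  | succ n IH =>
    intro P hP s
    rw [Function.iterate_succ_apply]
    have hΔ : Δ_[s] (fun t => P.eval t) = fun t => (Polynomial.taylor s P - P).eval t := by
      funext t
      simp [fwdDiff, Polynomial.eval_sub, Polynomial.taylor_eval]
    rw [hΔ]
    apply IH
    by_cases hd : P.natDegree = 0
    · obtain ⟨a, rfl⟩ : ∃ a, P = Polynomial.C a := ⟨P.coeff 0, P.eq_C_of_natDegree_eq_zero hd⟩
      simp only [Polynomial.taylor_C, sub_self, Polynomial.degree_zero]
      exact bot_lt_iff_ne_bot.2 (by simp)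
    · have hP0 : P ≠ 0 := fun h => hd (by simp [h])
      have hdeg : (Polynomial.taylor s P).degree = P.degree := by
        have h1 : (Polynomial.taylor s P).natDegree = P.natDegree := Polynomial.natDegree_taylor P s
        have h2 : Polynomial.taylor s P ≠ 0 := fun h => hP0 (Polynomial.taylor_injective s (by simp [h]))
        rw [Polynomial.degree_eq_natDegree h2, Polynomial.degree_eq_natDegree hP0, h1]
      have hlc : (Polynomial.taylor s P).leadingCoeff = P.leadingCoeff := by
        rw [Polynomial.taylor_apply, Polynomial.leadingCoeff_comp (by simp)]
        simp [Polynomial.leadingCoeff_X_add_C]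
      have h3 : (Polynomial.taylor s P - P).degree < P.degree := by
        have := Polynomial.degree_sub_lt hdeg (fun h => hP0 (Polynomial.taylor_injective s (by simp [h]))) hlc
        rwa [hdeg] at this
      have h4 : P.degree ≤ (n : WithBot ℕ) := by
        rw [Polynomial.degree_eq_natDegree hP0] at hP ⊢
        exact_mod_cast Nat.lt_succ_iff.1 (by exact_mod_cast hP)
      exact lt_of_lt_of_le h3 h4

lemma aux_poly (n : ℕ) (P : Polynomial ℝ) (hP : P.degree < n) (r s : ℝ) :
    ∑ k ∈ range (n + 1), (n.choose k : ℝ) * (-1) ^ (n - k) * P.eval (r + k * s) = 0 := by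
  have h1 := fwdDiff_iter_eq_sum_shift s (fun t => P.eval t) n r
  rw [aux_fwd n P hP s] at h1
  simp only [Pi.zero_apply] at h1
  rw [eq_comm]
  rw [show (0:ℝ) = ∑ k ∈ range (n+1), ((-1 : ℤ) ^ (n - k) * n.choose k) • P.eval (r + k • s) from h1]
  apply Finset.sum_congr rfl
  intro k _
  simp only [zsmul_eq_mul, nsmul_eq_mul]
  push_cast
  ring


lemma aux_core (n : ℕ) (hn : 1 ≤ n) (w : ℤ → ℝ)
    (hrec : ∀ m : ℤ, ∑ k ∈ range (n + 1), (n.choose k : ℝ) * (-1) ^ (n - k) * w (m + k) = 0)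
    (h0 : ∀ k : ℕ, k < n → w k = 0) : ∀ m : ℤ, w m = 0 := by
  -- forward
  have F : ∀ j : ℕ, w j = 0 := by
    intro j
    induction j using Nat.strong_induction_on with
    | _ j IH =>
      by_cases hj : j < n
      · exact h0 j hj
      · push_neg at hj
        obtain ⟨i, rfl⟩ := Nat.exists_eq_add_of_le hj  -- j = n + i
        have h1 := hrec (i : ℤ)
        rw [Finset.sum_range_succ] at h1
        have h2 : ∑ k ∈ range n, (n.choose k : ℝ) * (-1) ^ (n - k) * w (↑i + ↑k) = 0 := by
          apply Finset.sum_eq_zero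
          intro k hk
          have : w (↑i + ↑k) = 0 := by
            have : ((i + k : ℕ) : ℤ) = ↑i + ↑k := by push_cast; ring
            rw [← this]
            exact IH (i + k) (by simp at hk; omega)
          rw [this, mul_zero]
        rw [h2, zero_add, Nat.choose_self, Nat.sub_self, pow_zero] at h1
        have : w (↑i + ↑n) = 0 := by simpa using h1
        rw [show ((n + i : ℕ) : ℤ) = ↑i + ↑n by push_cast; ring]
        exact this
  have G : ∀ j : ℕ, ∀ m : ℤ, -(j : ℤ) ≤ m → w m = 0 := by
    intro j
    induction j with
    | zero =>
      intro m hm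
      have : m = (m.toNat : ℤ) := (Int.toNat_of_nonneg (by omega)).symm
      rw [this]; exact F m.toNat
    | succ j IH =>
      intro m hm
      by_cases hm' : -(j : ℤ) ≤ m
      · exact IH m hm'
      · have hme : m = -(j + 1 : ℤ) := by omega
        have h1 := hrec m
        rw [Finset.sum_range_succ'] at h1
        have h2 : ∑ k ∈ range n, (n.choose (k + 1) : ℝ) * (-1) ^ (n - (k + 1)) * w (m + ↑(k + 1)) = 0 := by
          apply Finset.sum_eq_zero
          intro k _
          have : w (m + ↑(k + 1)) = 0 := IH _ (by omega)
          rw [this, mul_zero]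
        rw [h2, zero_add, Nat.choose_zero_right, Nat.sub_zero] at h1
        have h3 : ((-1 : ℝ)) ^ n * w m = 0 := by simpa using h1
        rcases mul_eq_zero.1 h3 with h4 | h4
        · exact absurd h4 (by positivity)
        · exact h4
  intro m
  exact G m.natAbs m (by omega)


lemma aux_inj : Set.InjOn (fun i : ℕ => (i : ℝ)) (range n : Finset ℕ) :=
  fun a _ b _ hab => Nat.cast_injective hab

lemma aux_grid (n : ℕ) (hn : 1 ≤ n) (f : ℝ → ℝ)
    (hf : ∀ r s : ℝ, ∑ k ∈ range (n + 1), (n.choose k : ℝ) * (-1) ^ (n - k) * f (r + k * s) = 0)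
    (c : ℝ) : ∃ Q : Polynomial ℝ, Q.degree < n ∧ ∀ m : ℤ, f (m * c) = Q.eval (m : ℝ) := by
  set Q : Polynomial ℝ :=
    Lagrange.interpolate (range n) (fun i : ℕ => (i : ℝ)) (fun i : ℕ => f (i * c)) with hQdef
  have hQdeg : Q.degree < n := by
    simpa only [Finset.card_range] using Lagrange.degree_interpolate_lt (s := range n) (v := fun i : ℕ => (i : ℝ))
      (fun i : ℕ => f (i * c)) aux_inj
  refine ⟨Q, hQdeg, ?_⟩
  have key : ∀ m : ℤ, (fun m : ℤ => f (m * c) - Q.eval (m : ℝ)) m = 0 := by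
    apply aux_core n hn
    · intro m
      have h1 : ∑ k ∈ range (n + 1), (n.choose k : ℝ) * (-1) ^ (n - k) * f (((m + k : ℤ) : ℝ) * c) = 0 := by
        have := hf ((m : ℝ) * c) c
        rw [← this]
        apply Finset.sum_congr rfl
        intro k _
        congr 1
        push_cast
        ring
      have h2 : ∑ k ∈ range (n + 1), (n.choose k : ℝ) * (-1) ^ (n - k) * Q.eval (((m + k : ℤ) : ℝ)) = 0 := by
        have := aux_poly n Q hQdeg (m : ℝ) 1
        rw [← this]
        apply Finset.sum_congr rfl
        intro k _
        congr 2
        push_cast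
        ring
      simp only [mul_sub]
      rw [Finset.sum_sub_distrib, h1, h2, sub_zero]
    · intro k hk
      have h1 := Lagrange.eval_interpolate_at_node (s := range n) (v := fun i : ℕ => (i : ℝ))
        (fun i : ℕ => f (i * c)) aux_inj (i := k) (by simpa using hk)
      show f (((k : ℤ) : ℝ) * c) - Q.eval ((k : ℤ) : ℝ) = 0
      rw [show ((k : ℤ) : ℝ) = (k : ℝ) from by push_cast; ring]
      rw [← hQdef] at h1
      rw [h1]
      ring
  intro m
  have := key m
  simpa [sub_eq_zero] using this




theorem stmt16 (g : ℝ → ℝ) (hg : Continuous g) (n : ℕ) (hn : 1 ≤ n)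
    (h : ∀ r s : ℝ, ∑ k ∈ Finset.range (n + 1),
        (n.choose k : ℝ) * (-1) ^ (n - k) * g (r + k * s) = 0) :
    ∃ P : Polynomial ℝ, P.degree < n ∧ ∀ t : ℝ, g t = P.eval t := by
  set P : Polynomial ℝ := Lagrange.interpolate (range n) (fun i : ℕ => (i : ℝ)) (fun i : ℕ => g i) with hP
  have hPdeg : P.degree < n := by
    simpa only [Finset.card_range] using Lagrange.degree_interpolate_lt (s := range n) (v := fun i : ℕ => (i : ℝ)) (fun i : ℕ => g i) aux_inj
  set f : ℝ → ℝ := fun t => g t - P.eval t with hfdef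
  have hf : ∀ r s : ℝ, ∑ k ∈ range (n + 1), (n.choose k : ℝ) * (-1) ^ (n - k) * f (r + k * s) = 0 := by
    intro r s
    have := aux_poly n P hPdeg r s
    have h2 := h r s
    simp only [hfdef, mul_sub]
    rw [Finset.sum_sub_distrib, h2, this, sub_zero]
  have hf0 : ∀ k : ℕ, k < n → f k = 0 := by
    intro k hk
    have := Lagrange.eval_interpolate_at_node (s := range n) (v := fun i : ℕ => (i : ℝ)) (fun i : ℕ => g i) aux_inj
      (i := k) (by simpa using hk)
    exact sub_eq_zero.2 this.symm
  -- f vanishes on ℤ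
  have hfZ : ∀ m : ℤ, f m = 0 := by
    apply aux_core n hn (fun m => f m)
    · intro m
      have := hf (m : ℝ) 1
      simpa using this
    · intro k hk
      simpa using hf0 k hk
  -- f vanishes on ℚ
  have hfQ : ∀ x : ℚ, f x = 0 := by
    intro x
    obtain ⟨Q, hQdeg, hQ⟩ := aux_grid n hn f hf ((x.den : ℝ)⁻¹)
    have hden : (x.den : ℝ) ≠ 0 := Nat.cast_ne_zero.2 x.den_nz
    have hQ0 : Q = 0 := by
      apply Polynomial.eq_zero_of_infinite_isRoot
      apply Set.infinite_of_injective_forall_mem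
        (f := fun m : ℤ => ((m * x.den : ℤ) : ℝ))
      · intro a b hab
        simp only at hab
        have : (a * x.den : ℤ) = (b * x.den : ℤ) := by exact_mod_cast hab
        have hd : (x.den : ℤ) ≠ 0 := by exact_mod_cast x.den_nz
        exact mul_right_cancel₀ hd this
      · intro m
        have h1 := hQ (m * x.den)
        have h2 : ((m * x.den : ℤ) : ℝ) * (x.den : ℝ)⁻¹ = (m : ℝ) := by
          push_cast
          field_simp
        rw [h2] at h1
        have h3 : f m = 0 := hfZ m
        simp only [Set.mem_setOf_eq, Polynomial.IsRoot]
        rw [← h1, h3]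
    have h1 := hQ x.num
    rw [hQ0] at h1
    simp only [Polynomial.eval_zero] at h1
    rwa [Rat.cast_def, div_eq_mul_inv]
  have hfc : Continuous f := hg.sub (Polynomial.continuous P)
  have hfzero : f = 0 := by
    apply Continuous.ext_on Rat.denseRange_cast hfc continuous_const
    rintro t ⟨x, rfl⟩
    exact hfQ x
  refine ⟨P, hPdeg, fun t => ?_⟩
  have := congrFun hfzero t
  simp only [hfdef, Pi.zero_apply] at this
  linarith
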